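/- There exist constants K > 0 and δ ∈ (0, π) such that for all integers n ≥ 1 and all integers j with 1 ≤ j and λ_j = 2πj/n ≤ δ: | J_n(e^{iλ_j}) + log λ_j − (i/2)(π − λ_j) | ≤ K(λ_j² + j^{−1}), where J_n(z) = Σ_{k=1}^{n} z^k / k. In particular J_n(e^{iλ_j}) = −log λ_j + (i/2)(π − λ_j) + O(λ_j²) + O(j^{−1}). -/

import Mathlib

open Finset Filter Complex Real

/-- Abel summation bound for `∑ w^k / k` over `Ico (n+1) N`. -/
lemma abel_aux (w : ℂ) (M : ℝ) (n : ℕ)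
    (hS : ∀ N, ‖∑ k ∈ Finset.Ico (n+1) N, w ^ k‖ ≤ M) :
    ∀ N, ‖∑ k ∈ Finset.Ico (n+1) N, w ^ k / k‖ ≤ M / (n+1) := by
  have hM0 : 0 ≤ M := le_trans (by simp) (hS (n+1))
  have key : ∀ N, n+1 ≤ N → ‖(∑ k ∈ Finset.Ico (n+1) (N+1), w ^ k / k)
      - (∑ k ∈ Finset.Ico (n+1) (N+1), w ^ k) / N‖ ≤ M * (1/(n+1) - 1/N) := by
    intro N hN
    induction N, hN using Nat.le_induction with
    | base =>
        rw [Finset.sum_Ico_succ_top le_rfl, Finset.sum_Ico_succ_top le_rfl]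
        simp
    | succ N hN ih =>
        have hN0 : (0:ℝ) < N := by exact_mod_cast Nat.lt_of_lt_of_le n.succ_pos hN
        have hcast : ((N:ℂ)+1) = ((N+1 : ℕ) : ℂ) := by push_cast; ring
        rw [Finset.sum_Ico_succ_top (by omega : n+1 ≤ N+1) (fun k => w ^ k / (k:ℂ)),
            Finset.sum_Ico_succ_top (by omega : n+1 ≤ N+1) (fun k => w ^ k)]
        have hid : (∑ k ∈ Finset.Ico (n+1) (N+1), w ^ k / k) + w^(N+1)/((N+1:ℕ):ℂ)
            - ((∑ k ∈ Finset.Ico (n+1) (N+1), w ^ k) + w^(N+1)) / ((N+1:ℕ):ℂ)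
            = ((∑ k ∈ Finset.Ico (n+1) (N+1), w ^ k / k)
                - (∑ k ∈ Finset.Ico (n+1) (N+1), w ^ k) / N)
              + (∑ k ∈ Finset.Ico (n+1) (N+1), w ^ k) * ((1:ℂ)/N - 1/((N+1:ℕ):ℂ)) := by
          push_cast
          ring
        rw [hid]
        have h2 : ‖(∑ k ∈ Finset.Ico (n+1) (N+1), w ^ k) * ((1:ℂ)/N - 1/((N+1:ℕ):ℂ))‖
            ≤ M * (1/N - 1/(N+1)) := by
          rw [norm_mul]
          have : ((1:ℂ)/N - 1/((N+1:ℕ):ℂ)) = (((1/N - 1/(N+1) : ℝ)) : ℂ) := by push_cast; ring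
          have hnn : (0:ℝ) ≤ 1/N - 1/(N+1) := by
            rw [sub_nonneg]
            apply one_div_le_one_div_of_le hN0
            linarith
          rw [this, Complex.norm_real, Real.norm_eq_abs, _root_.abs_of_nonneg hnn]
          exact mul_le_mul (hS _) le_rfl hnn hM0
        calc _ ≤ ‖(∑ k ∈ Finset.Ico (n+1) (N+1), w ^ k / k)
                - (∑ k ∈ Finset.Ico (n+1) (N+1), w ^ k) / N‖
              + ‖(∑ k ∈ Finset.Ico (n+1) (N+1), w ^ k) * ((1:ℂ)/N - 1/((N+1:ℕ):ℂ))‖ :=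
                norm_add_le _ _
          _ ≤ M * (1/(n+1) - 1/N) + M * (1/N - 1/(N+1)) := add_le_add ih h2
          _ = M * (1/(n+1) - 1/(N+1)) := by ring
          _ = M * (1/(n+1) - 1/((N+1:ℕ):ℝ)) := by push_cast; ring
  intro N
  rcases le_or_gt N (n+1) with h | h
  · rcases Nat.lt_or_ge N (n+1) with h' | h'
    · rw [Finset.Ico_eq_empty (by omega)]
      simp
      positivity
    · have hN : N = n+1 := le_antisymm h h'
      subst hN
      rw [Finset.Ico_eq_empty (by omega)]
      simp
      positivity
  · obtain ⟨N', rfl⟩ : ∃ N', N = N' + 1 := ⟨N - 1, by omega⟩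
    have hN' : n + 1 ≤ N' := by omega
    have h1 := key N' hN'
    have hN0 : (0:ℝ) < N' := by exact_mod_cast Nat.lt_of_lt_of_le n.succ_pos hN'
    have h2 : ‖(∑ k ∈ Finset.Ico (n+1) (N'+1), w ^ k) / (N' : ℂ)‖ ≤ M / N' := by
      rw [norm_div, Complex.norm_natCast]
      gcongr
      exact hS _
    calc ‖∑ k ∈ Finset.Ico (n+1) (N'+1), w ^ k / k‖
        ≤ ‖(∑ k ∈ Finset.Ico (n+1) (N'+1), w ^ k / k)
            - (∑ k ∈ Finset.Ico (n+1) (N'+1), w ^ k) / N'‖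
          + ‖(∑ k ∈ Finset.Ico (n+1) (N'+1), w ^ k) / (N' : ℂ)‖ := by
            apply (norm_add_le _ _).trans_eq'
            congr 1
            ring
      _ ≤ M * (1/(n+1) - 1/N') + M / N' := add_le_add h1 h2
      _ ≤ M / (n+1) := by rw [mul_sub]; rw [mul_one_div, mul_one_div]; linarith

lemma geom_bound (w : ℂ) (hw : ‖w‖ ≤ 1) (hw1 : w ≠ 1) (n N : ℕ) :
    ‖∑ k ∈ Finset.Ico (n+1) N, w ^ k‖ ≤ 2 / ‖1 - w‖ := by
  have h1w : (0:ℝ) < ‖1 - w‖ := by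
    rw [norm_pos_iff]
    intro h
    apply hw1
    have := sub_eq_zero.mp h
    exact this.symm
  rcases le_or_gt N (n+1) with h | h
  · rw [Finset.Ico_eq_empty (by omega)]
    simp
    positivity
  · rw [Finset.sum_Ico_eq_sub _ (by omega : n+1 ≤ N)]
    rw [geom_sum_eq hw1, geom_sum_eq hw1]
    have : (w ^ N - 1) / (w - 1) - (w ^ (n+1) - 1) / (w - 1) = (w ^ N - w ^ (n+1)) / (w - 1) := by
      ring
    rw [this, norm_div, norm_sub_rev w 1]
    gcongr
    calc ‖w ^ N - w ^ (n+1)‖ ≤ ‖w ^ N‖ + ‖w ^ (n+1)‖ := norm_sub_le _ _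
      _ ≤ 1 + 1 := by
          rw [norm_pow, norm_pow]
          exact add_le_add (pow_le_one₀ (norm_nonneg _) hw) (pow_le_one₀ (norm_nonneg _) hw)
      _ = 2 := by norm_num

lemma lemA (w : ℂ) (hw : ‖w‖ < 1) (n : ℕ) :
    ‖(∑ k ∈ Finset.Icc 1 n, w ^ k / k) + Complex.log (1 - w)‖ ≤ 2 / ‖1 - w‖ / (n+1) := by
  have hw1 : w ≠ 1 := by intro h; rw [h] at hw; simp at hw
  have htail := abel_aux w (2 / ‖1 - w‖) n (geom_bound w hw.le hw1 n)
  have hsum := Complex.hasSum_taylorSeries_neg_log hw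
  have hps := hsum.tendsto_sum_nat
  have hIcc : ∑ k ∈ Finset.range (n+1), w ^ k / k = ∑ k ∈ Finset.Icc 1 n, w ^ k / k := by
    rw [Finset.range_eq_Ico, ← Finset.sum_Ico_consecutive _ (Nat.zero_le 1) (by omega : 1 ≤ n+1)]
    rw [← Finset.Ico_add_one_right_eq_Icc]
    simp
  have h1 : Tendsto (fun N => (∑ k ∈ Finset.range N, w ^ k / k)
      - ∑ k ∈ Finset.range (n+1), w ^ k / k) atTop
      (nhds (-Complex.log (1 - w) - ∑ k ∈ Finset.range (n+1), w ^ k / k)) :=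
    hps.sub_const _
  have h2 : ‖-Complex.log (1 - w) - ∑ k ∈ Finset.range (n+1), w ^ k / k‖
      ≤ 2 / ‖1 - w‖ / (n+1) := by
    apply le_of_tendsto h1.norm
    filter_upwards [eventually_ge_atTop (n+1)] with N hN
    rw [← Finset.sum_Ico_eq_sub _ hN]
    exact htail N
  calc ‖(∑ k ∈ Finset.Icc 1 n, w ^ k / k) + Complex.log (1 - w)‖
      = ‖-Complex.log (1 - w) - ∑ k ∈ Finset.range (n+1), w ^ k / k‖ := by
        rw [hIcc, ← norm_neg]
        congr 1
        ring
    _ ≤ _ := h2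

lemma lemB (t : ℝ) (h0 : 0 < t) (hπ : t < Real.pi) (n : ℕ) :
    ‖(∑ k ∈ Finset.Icc 1 n, Complex.exp (t * Complex.I) ^ k / k)
      + Complex.log (1 - Complex.exp (t * Complex.I))‖
      ≤ 2 / ‖1 - Complex.exp (t * Complex.I)‖ / (n+1) := by
  set z := Complex.exp (t * Complex.I) with hz
  have him : z.im = Real.sin t := by
    rw [hz, Complex.exp_ofReal_mul_I_im]
  have hsin : 0 < Real.sin t := Real.sin_pos_of_pos_of_lt_pi h0 hπ
  have hz1 : z ≠ 1 := by
    intro h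
    rw [h] at him
    simp at him
    linarith
  have hzslit : 1 - z ∈ Complex.slitPlane := by
    apply Or.inr
    simp [Complex.sub_im, him]
    linarith
  have hznorm : ‖z‖ = 1 := by
    rw [hz, Complex.norm_exp]
    simp
  have h1z : (0:ℝ) < ‖1 - z‖ := by
    rw [norm_pos_iff, sub_ne_zero]
    exact fun h => hz1 h.symm
  -- limit along r → 1 within Ioo 0 1
  have hne : (nhdsWithin (1:ℝ) (Set.Ioo 0 1)).NeBot := right_nhdsWithin_Ioo_neBot one_pos
  have hf : Tendsto (fun r : ℝ => (∑ k ∈ Finset.Icc 1 n, ((r:ℂ) * z) ^ k / k)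
      + Complex.log (1 - (r:ℂ) * z)) (nhdsWithin 1 (Set.Ioo 0 1))
      (nhds ((∑ k ∈ Finset.Icc 1 n, z ^ k / k) + Complex.log (1 - z))) := by
    have hc : ContinuousAt (fun r : ℝ => (∑ k ∈ Finset.Icc 1 n, ((r:ℂ) * z) ^ k / k)
        + Complex.log (1 - (r:ℂ) * z)) 1 := by
      apply ContinuousAt.add
      · exact (continuous_finset_sum _ fun k _ => ((Complex.continuous_ofReal.mul
          continuous_const).pow k).div_const _).continuousAt
      · apply ContinuousAt.clog
        · exact continuousAt_const.sub (Complex.continuous_ofReal.continuousAt.mul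
            continuousAt_const)
        · simpa using hzslit
    have := hc.tendsto.mono_left (nhdsWithin_le_nhds (s := Set.Ioo 0 1))
    simpa using this
  have hg : Tendsto (fun r : ℝ => 2 / ‖1 - (r:ℂ) * z‖ / (n+1))
      (nhdsWithin 1 (Set.Ioo 0 1)) (nhds (2 / ‖1 - z‖ / (n+1))) := by
    have hc : ContinuousAt (fun r : ℝ => 2 / ‖1 - (r:ℂ) * z‖ / (n+1)) 1 := by
      apply ContinuousAt.div_const
      apply ContinuousAt.div continuousAt_const
      · exact (continuousAt_const.sub (Complex.continuous_ofReal.continuousAt.mul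
          continuousAt_const)).norm
      · simpa using h1z.ne'
    have := hc.tendsto.mono_left (nhdsWithin_le_nhds (s := Set.Ioo 0 1))
    simpa using this
  apply le_of_tendsto_of_tendsto hf.norm hg
  filter_upwards [self_mem_nhdsWithin] with r hr
  have hrw : ‖(r:ℂ) * z‖ < 1 := by
    rw [norm_mul, hznorm, mul_one, Complex.norm_real, Real.norm_eq_abs,
      _root_.abs_of_pos hr.1]
    exact hr.2
  exact lemA _ hrw n

lemma log_identity (t : ℝ) (h0 : 0 < t) (hπ : t < Real.pi) :
    Complex.log (1 - Complex.exp (t * Complex.I))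
      = ((Real.log (2 * Real.sin (t/2)) : ℝ) : ℂ) + (((t - Real.pi)/2 : ℝ) : ℂ) * Complex.I := by
  have hsinpos : 0 < Real.sin (t/2) :=
    Real.sin_pos_of_pos_of_lt_pi (by linarith) (by linarith [Real.pi_pos])
  have h2s : (0:ℝ) < 2 * Real.sin (t/2) := by linarith
  set u : ℂ := ((Real.log (2 * Real.sin (t/2)) : ℝ) : ℂ) + (((t - Real.pi)/2 : ℝ) : ℂ) * Complex.I
    with hu
  have hexp : Complex.exp u = 1 - Complex.exp (t * Complex.I) := by
    rw [hu, Complex.exp_add]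
    rw [← Complex.ofReal_exp, Real.exp_log h2s]
    rw [Complex.exp_mul_I]
    rw [Complex.exp_mul_I]
    have hcos : Complex.cos ((((t - Real.pi)/2 : ℝ) : ℂ)) = ((Real.sin (t/2) : ℝ) : ℂ) := by
      rw [← Complex.ofReal_cos]
      congr 1
      have : (t - Real.pi)/2 = -(Real.pi/2 - t/2) := by ring
      rw [this, Real.cos_neg, Real.cos_pi_div_two_sub]
    have hsin : Complex.sin ((((t - Real.pi)/2 : ℝ) : ℂ)) = -((Real.cos (t/2) : ℝ) : ℂ) := by
      rw [← Complex.ofReal_sin]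
      have : (t - Real.pi)/2 = -(Real.pi/2 - t/2) := by ring
      rw [this, Real.sin_neg, Real.sin_pi_div_two_sub]
      push_cast
      ring
    rw [hcos, hsin, ← Complex.ofReal_cos, ← Complex.ofReal_sin]
    have hc2 : Real.cos t = 1 - 2 * Real.sin (t/2) ^ 2 := by
      have := Real.cos_two_mul' (t/2)
      have h2 : 2 * (t/2) = t := by ring
      rw [h2] at this
      nlinarith [Real.sin_sq_add_cos_sq (t/2)]
    have hs2 : Real.sin t = 2 * Real.sin (t/2) * Real.cos (t/2) := by
      have := Real.sin_two_mul (t/2)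
      have h2 : 2 * (t/2) = t := by ring
      rw [h2] at this
      linarith
    rw [hc2, hs2]
    push_cast
    ring
  rw [← hexp, Complex.log_exp]
  · rw [hu]
    simp
    linarith [Real.pi_pos]
  · rw [hu]
    simp
    linarith

theorem truncated_log_series_expansion :
    ∃ K > 0, ∃ δ : ℝ, 0 < δ ∧ δ < Real.pi ∧
      ∀ n : ℕ, 1 ≤ n → ∀ j : ℕ, 1 ≤ j → 2 * Real.pi * j / n ≤ δ →
        ‖(∑ k ∈ Finset.Icc 1 n,
                Complex.exp (Complex.I * (k : ℂ) * ((2 * Real.pi * j / n : ℝ) : ℂ)) / (k : ℂ)) +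
              ((Real.log (2 * Real.pi * j / n) : ℝ) : ℂ) -
              Complex.I / 2 * ((Real.pi - 2 * Real.pi * j / n : ℝ) : ℂ)‖ ≤
          K * ((2 * Real.pi * j / n) ^ 2 + (j : ℝ)⁻¹) := by
  have hπ3 := Real.pi_gt_three
  refine ⟨1, one_pos, 1, one_pos, by linarith, ?_⟩
  intro n hn j hj hδ
  set lam : ℝ := 2 * Real.pi * (j:ℝ) / (n:ℝ) with hlam
  have hn0 : (0:ℝ) < n := by exact_mod_cast hn
  have hj0 : (0:ℝ) < j := by exact_mod_cast hj
  have hl0 : 0 < lam := div_pos (mul_pos (mul_pos two_pos Real.pi_pos) hj0) hn0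
  have hlpi : lam < Real.pi := lt_of_le_of_lt hδ (by linarith)
  have hl1 : lam ≤ 1 := hδ
  have hsum_eq : (∑ k ∈ Finset.Icc 1 n, Complex.exp (Complex.I * (k:ℂ) * ((lam : ℝ):ℂ))/(k:ℂ))
      = ∑ k ∈ Finset.Icc 1 n, Complex.exp ((lam:ℂ) * Complex.I) ^ k / (k:ℂ) := by
    apply Finset.sum_congr rfl
    intro k _
    rw [show (Complex.I * (k:ℂ) * ((lam:ℝ):ℂ)) = (k:ℕ) * (((lam:ℝ):ℂ) * Complex.I) by
      push_cast; ring, Complex.exp_nat_mul]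
  rw [hsum_eq]
  set z := Complex.exp ((lam:ℂ) * Complex.I) with hz
  have hE1 := lemB lam hl0 hlpi n
  have hlogid := log_identity lam hl0 hlpi
  -- sin bounds
  have hs1 : Real.sin (lam/2) < lam/2 := Real.sin_lt (by positivity)
  have hs2 : lam/2 - (lam/2)^3/4 < Real.sin (lam/2) :=
    by have := Real.sin_gt_sub_cube (x := lam/2) (by positivity); nlinarith [pow_pos (half_pos hl0) 3]
  have hcube : lam^3 ≤ lam := by nlinarith [mul_nonneg (mul_nonneg (sub_nonneg.mpr hl1) hl0.le) hl0.le, mul_nonneg (sub_nonneg.mpr hl1) hl0.le]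
  have hsinpos : 0 < Real.sin (lam/2) := by nlinarith
  have h2s : (0:ℝ) < 2 * Real.sin (lam/2) := by linarith
  -- norm lower bound
  have hsinlam : (3/4) * lam ≤ Real.sin lam := by
    have := Real.sin_gt_sub_cube hl0
    nlinarith [hcube]
  have him : (1 - z).im = -Real.sin lam := by
    simp [hz, Complex.exp_ofReal_mul_I_im]
  have h1z : (3/4) * lam ≤ ‖1 - z‖ := by
    have h := Complex.abs_im_le_norm (1 - z)
    rw [him, abs_neg, _root_.abs_of_nonneg (by linarith : (0:ℝ) ≤ Real.sin lam)] at h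
    linarith
  have hln : lam * n = 2 * Real.pi * j := by
    rw [hlam]; field_simp
  have hE1' : 2/‖1-z‖/(n+1) ≤ 1/(j:ℝ) := by
    rw [div_div, div_le_div_iff₀ (mul_pos (lt_of_lt_of_le (by linarith) h1z) (by positivity)) hj0]
    have hmul : (3/4) * lam * n ≤ ‖1 - z‖ * n := mul_le_mul_of_nonneg_right h1z hn0.le
    nlinarith [norm_nonneg (1 - z)]
  -- E2 bound
  have hE2 : |Real.log lam - Real.log (2 * Real.sin (lam/2))| ≤ lam^2 := by
    rw [← Real.log_div (ne_of_gt hl0) (ne_of_gt h2s)]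
    rw [_root_.abs_of_nonneg (Real.log_nonneg ((one_le_div h2s).mpr (by linarith)))]
    have hle := Real.log_le_sub_one_of_pos (div_pos hl0 h2s)
    have : lam / (2 * Real.sin (lam/2)) - 1 ≤ lam^2 := by
      rw [div_sub_one (ne_of_gt h2s), div_le_iff₀ h2s]
      nlinarith
    linarith
  -- decomposition
  have hdecomp : (∑ k ∈ Finset.Icc 1 n, z^k/(k:ℂ)) + ((Real.log lam :ℝ):ℂ)
        - Complex.I/2 * ((Real.pi - lam : ℝ):ℂ)
      = ((∑ k ∈ Finset.Icc 1 n, z^k/(k:ℂ)) + Complex.log (1 - z))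
        + (((Real.log lam - Real.log (2*Real.sin (lam/2))) : ℝ) : ℂ) := by
    rw [hlogid]
    push_cast
    ring
  rw [hdecomp]
  calc ‖((∑ k ∈ Finset.Icc 1 n, z^k/(k:ℂ)) + Complex.log (1 - z))
        + (((Real.log lam - Real.log (2*Real.sin (lam/2))) : ℝ) : ℂ)‖
      ≤ ‖(∑ k ∈ Finset.Icc 1 n, z^k/(k:ℂ)) + Complex.log (1 - z)‖
        + ‖(((Real.log lam - Real.log (2*Real.sin (lam/2))) : ℝ) : ℂ)‖ := norm_add_le _ _
    _ ≤ 1/(j:ℝ) + lam^2 := by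
        apply add_le_add (hE1.trans hE1')
        rw [Complex.norm_real, Real.norm_eq_abs]
        exact hE2
    _ ≤ 1 * (lam^2 + (j:ℝ)⁻¹) := by
        rw [one_div]
        linarith
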